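/- Let g : ℕ → ℝ and ν₀ > 0 be such that Σ_{k=0}^∞ |g(k)| νᵏ/k! < ∞ for all ν in a neighborhood of ν₀. Define F(ν) = Σ_{k=0}^∞ g(k) νᵏ e^{−ν}/k!, the expectation of g under the Poisson distribution with mean ν. Then F is differentiable at ν₀ with F'(ν₀) = E[g(X+1)] − E[g(X)], where X ~ Poisson(ν₀); that is, F'(ν₀) = Σ_{k=0}^∞ (g(k+1) − g(k)) ν₀ᵏ e^{−ν₀}/k!. -/

import Mathlib

/-- derivative of a Poisson expectation in its mean: if
`∑_k |g(k)| νᵏ/k! < ∞` for all `ν` in a neighborhood of `ν₀ > 0`, then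
`F(ν) = E[g(X_ν)] = ∑_k g(k) νᵏ e^{-ν}/k!` is differentiable at `ν₀` with
`F'(ν₀) = E[g(X+1)] - E[g(X)] = ∑_k (g(k+1) - g(k)) ν₀ᵏ e^{-ν₀}/k!`. -/
theorem poisson_expectation_hasDerivAt
    (g : ℕ → ℝ) (ν₀ : ℝ) (hν₀ : 0 < ν₀)
    (hsum : ∀ᶠ ν in nhds ν₀,
      Summable fun k : ℕ => |g k| * ν ^ k / (Nat.factorial k : ℝ)) :
    HasDerivAt
      (fun ν : ℝ => ∑' k : ℕ, g k * ν ^ k * Real.exp (-ν) / (Nat.factorial k : ℝ))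
      (∑' k : ℕ, (g (k + 1) - g k) * ν₀ ^ k * Real.exp (-ν₀) / (Nat.factorial k : ℝ))
      ν₀ := by
  obtain ⟨ε, εpos, hε⟩ := Metric.eventually_nhds_iff.mp hsum
  set ν₁ : ℝ := ν₀ + ε / 2 with hν₁def
  set b : ℝ := ν₀ + ε / 4 with hbdef
  have hbpos : 0 < b := by positivity
  have hν₀b : ν₀ < b := by simp [hbdef]; linarith
  have hbν₁ : b < ν₁ := by simp [hbdef, hν₁def]; linarith
  have hν₁pos : 0 < ν₁ := lt_trans hbpos hbν₁
  have hsum₁ : Summable fun k : ℕ => |g k| * ν₁ ^ k / (Nat.factorial k : ℝ) := by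
    apply hε
    rw [Real.dist_eq, hν₁def, show ν₀ + ε / 2 - ν₀ = ε / 2 by ring,
      abs_of_pos (by linarith)]
    linarith
  have hsum₀ : Summable fun k : ℕ => |g k| * ν₀ ^ k / (Nat.factorial k : ℝ) := by
    apply hε; simp [Real.dist_eq, εpos]
  -- the ratio b/ν₁ < 1
  set r : ℝ := b / ν₁ with hrdef
  have hr0 : 0 ≤ r := by positivity
  have hr1 : r < 1 := (div_lt_one hν₁pos).mpr hbν₁
  -- bound (k/b + 1) * r^k by some M
  have hw : Filter.Tendsto (fun k : ℕ => ((k : ℝ) / b + 1) * r ^ k) Filter.atTop (nhds 0) := by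
    have h1 : Filter.Tendsto (fun k : ℕ => (k : ℝ) * r ^ k) Filter.atTop (nhds 0) := by
      have := (summable_pow_mul_geometric_of_norm_lt_one 1 (by rwa [Real.norm_eq_abs, abs_of_nonneg hr0]) : Summable fun k : ℕ => (k : ℝ) ^ 1 * r ^ k).tendsto_atTop_zero
      simpa using this
    have h2 : Filter.Tendsto (fun k : ℕ => r ^ k) Filter.atTop (nhds 0) :=
      tendsto_pow_atTop_nhds_zero_of_lt_one hr0 hr1
    have := (h1.const_mul (1 / b)).add h2
    simp only [mul_zero, add_zero, zero_add] at this
    convert this using 2 with k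
    ring
  obtain ⟨M, hM⟩ := hw.bddAbove_range
  have hMb : ∀ k : ℕ, (k : ℝ) * b ^ (k - 1) + b ^ k ≤ M * ν₁ ^ k := by
    intro k
    have h1 : (k : ℝ) * b ^ (k - 1) + b ^ k ≤ ((k : ℝ) / b + 1) * b ^ k := by
      rw [add_mul, one_mul]
      rcases Nat.eq_zero_or_pos k with hk | hk
      · simp [hk]
      · have he : b ^ k = b ^ (k - 1) * b := by
          rw [← pow_succ, Nat.sub_add_cancel hk]
        have hbk : ((k : ℝ) / b) * b ^ k = (k : ℝ) * b ^ (k - 1) := by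
          rw [he]; field_simp
        linarith
    have h2 : ((k : ℝ) / b + 1) * b ^ k = (((k : ℝ) / b + 1) * r ^ k) * ν₁ ^ k := by
      have hrν : r * ν₁ = b := div_mul_cancel₀ b (ne_of_gt hν₁pos)
      rw [mul_assoc, ← mul_pow, hrν]
    have h3 : ((k : ℝ) / b + 1) * r ^ k ≤ M := hM ⟨k, rfl⟩
    calc (k : ℝ) * b ^ (k - 1) + b ^ k ≤ ((k : ℝ) / b + 1) * b ^ k := h1
      _ = (((k : ℝ) / b + 1) * r ^ k) * ν₁ ^ k := h2
      _ ≤ M * ν₁ ^ k := mul_le_mul_of_nonneg_right h3 (pow_nonneg hν₁pos.le k)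
  -- the terms and their derivatives
  set G' : ℕ → ℝ → ℝ := fun k ν =>
    g k * ((k : ℝ) * ν ^ (k - 1) * Real.exp (-ν) + ν ^ k * (Real.exp (-ν) * (-1)))
      / (Nat.factorial k : ℝ) with hG'def
  set u : ℕ → ℝ := fun k => M * (|g k| * ν₁ ^ k / (Nat.factorial k : ℝ)) with hudef
  have hu : Summable u := hsum₁.mul_left M
  have hderiv : ∀ (k : ℕ) (ν : ℝ), ν ∈ Set.Ioo (0 : ℝ) b →
      HasDerivAt (fun ν : ℝ => g k * ν ^ k * Real.exp (-ν) / (Nat.factorial k : ℝ))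
        (G' k ν) ν := by
    intro k ν _
    have hexp : HasDerivAt (fun ν : ℝ => Real.exp (-ν)) (Real.exp (-ν) * (-1)) ν :=
      ((hasDerivAt_id ν).neg).exp
    have h1 := ((hasDerivAt_pow k ν).mul hexp).const_mul (g k)
    have h2 := h1.div_const (Nat.factorial k : ℝ)
    have heq : (fun ν : ℝ => g k * ν ^ k * Real.exp (-ν) / (Nat.factorial k : ℝ))
        = fun ν : ℝ => g k * (ν ^ k * Real.exp (-ν)) / (Nat.factorial k : ℝ) := by
      funext x; ring
    rw [heq]
    exact h2
  have hbound : ∀ (k : ℕ) (ν : ℝ), ν ∈ Set.Ioo (0 : ℝ) b → ‖G' k ν‖ ≤ u k := by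
    intro k ν hν
    obtain ⟨hν0, hνb⟩ := hν
    have hexp1 : Real.exp (-ν) ≤ 1 := Real.exp_le_one_iff.mpr (by linarith)
    have hexp0 : 0 < Real.exp (-ν) := Real.exp_pos _
    have hfac : (0 : ℝ) < (Nat.factorial k : ℝ) := by positivity
    have habs : |(k : ℝ) * ν ^ (k - 1) * Real.exp (-ν) + ν ^ k * (Real.exp (-ν) * (-1))|
        ≤ (k : ℝ) * b ^ (k - 1) + b ^ k := by
      calc |(k : ℝ) * ν ^ (k - 1) * Real.exp (-ν) + ν ^ k * (Real.exp (-ν) * (-1))|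
          ≤ |(k : ℝ) * ν ^ (k - 1) * Real.exp (-ν)| + |ν ^ k * (Real.exp (-ν) * (-1))| :=
            abs_add_le _ _
        _ = (k : ℝ) * ν ^ (k - 1) * Real.exp (-ν) + ν ^ k * Real.exp (-ν) := by
            rw [abs_of_nonneg (by positivity), abs_mul, abs_of_nonneg (by positivity : (0:ℝ) ≤ ν ^ k)]
            simp [abs_of_pos hexp0]
        _ ≤ (k : ℝ) * b ^ (k - 1) * 1 + b ^ k * 1 := by
            gcongr
        _ = (k : ℝ) * b ^ (k - 1) + b ^ k := by ring
    calc ‖G' k ν‖ = |g k| * |(k : ℝ) * ν ^ (k - 1) * Real.exp (-ν)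
            + ν ^ k * (Real.exp (-ν) * (-1))| / (Nat.factorial k : ℝ) := by
          rw [hG'def, Real.norm_eq_abs, abs_div, abs_mul, abs_of_pos hfac]
      _ ≤ |g k| * ((k : ℝ) * b ^ (k - 1) + b ^ k) / (Nat.factorial k : ℝ) := by gcongr
      _ ≤ |g k| * (M * ν₁ ^ k) / (Nat.factorial k : ℝ) := by gcongr; exact hMb k
      _ = u k := by rw [hudef]; ring
  have hg0 : Summable fun k : ℕ => g k * ν₀ ^ k * Real.exp (-ν₀) / (Nat.factorial k : ℝ) := by
    apply Summable.of_norm_bounded hsum₀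
    intro k
    have hfac : (0 : ℝ) < (Nat.factorial k : ℝ) := by positivity
    have hexp1 : Real.exp (-ν₀) ≤ 1 := Real.exp_le_one_iff.mpr (by linarith)
    rw [Real.norm_eq_abs, abs_div, abs_of_pos hfac, abs_mul, abs_mul,
      abs_of_nonneg (by positivity : (0:ℝ) ≤ ν₀ ^ k), abs_of_pos (Real.exp_pos _)]
    calc |g k| * ν₀ ^ k * Real.exp (-ν₀) / (Nat.factorial k : ℝ)
        ≤ |g k| * ν₀ ^ k * 1 / (Nat.factorial k : ℝ) := by gcongr
      _ = |g k| * ν₀ ^ k / (Nat.factorial k : ℝ) := by ring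
  have hmem : ν₀ ∈ Set.Ioo (0 : ℝ) b := ⟨hν₀, hν₀b⟩
  have key := hasDerivAt_tsum_of_isPreconnected hu isOpen_Ioo
    (isPreconnected_Ioo) hderiv hbound hmem hg0 hmem
  -- now identify the sum of derivatives with the target
  have hsumG' : Summable fun k => G' k ν₀ :=
    Summable.of_norm_bounded hu (fun k => hbound k ν₀ hmem)
  have hC : Summable fun k : ℕ => g k * ν₀ ^ k * Real.exp (-ν₀) / (Nat.factorial k : ℝ) := hg0
  set A : ℕ → ℝ := fun k => g k * (k : ℝ) * ν₀ ^ (k - 1) * Real.exp (-ν₀) / (Nat.factorial k : ℝ)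
    with hAdef
  have hGAC : ∀ k, G' k ν₀ = A k - g k * ν₀ ^ k * Real.exp (-ν₀) / (Nat.factorial k : ℝ) := by
    intro k; rw [hG'def, hAdef]; ring
  have hA : Summable A := by
    have : A = fun k => G' k ν₀ + g k * ν₀ ^ k * Real.exp (-ν₀) / (Nat.factorial k : ℝ) := by
      funext k; rw [hGAC k]; ring
    rw [this]; exact hsumG'.add hC
  have hAshift : ∀ k : ℕ, A (k + 1) = g (k + 1) * ν₀ ^ k * Real.exp (-ν₀) / (Nat.factorial k : ℝ) := by
    intro k
    rw [hAdef]
    simp only [Nat.add_sub_cancel, Nat.factorial_succ, Nat.cast_mul, Nat.cast_add, Nat.cast_one]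
    have : ((k : ℝ) + 1) ≠ 0 := by positivity
    field_simp
  have hAsum : ∑' k, A k = ∑' k : ℕ, g (k + 1) * ν₀ ^ k * Real.exp (-ν₀) / (Nat.factorial k : ℝ) := by
    rw [hA.tsum_eq_zero_add]
    simp only [hAdef, Nat.cast_zero, mul_zero, zero_mul, zero_div, zero_add]
    exact tsum_congr hAshift
  have hA' : Summable fun k : ℕ => g (k + 1) * ν₀ ^ k * Real.exp (-ν₀) / (Nat.factorial k : ℝ) := by
    have := (summable_nat_add_iff 1).mpr hA
    exact this.congr hAshift
  have htarget : (∑' k : ℕ, G' k ν₀)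
      = ∑' k : ℕ, (g (k + 1) - g k) * ν₀ ^ k * Real.exp (-ν₀) / (Nat.factorial k : ℝ) := by
    calc (∑' k : ℕ, G' k ν₀)
        = ∑' k : ℕ, (A k - g k * ν₀ ^ k * Real.exp (-ν₀) / (Nat.factorial k : ℝ)) :=
          tsum_congr hGAC
      _ = (∑' k, A k) - ∑' k, g k * ν₀ ^ k * Real.exp (-ν₀) / (Nat.factorial k : ℝ) :=
          hA.tsum_sub hC
      _ = ∑' k : ℕ, (g (k + 1) * ν₀ ^ k * Real.exp (-ν₀) / (Nat.factorial k : ℝ)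
            - g k * ν₀ ^ k * Real.exp (-ν₀) / (Nat.factorial k : ℝ)) := by
          rw [hAsum, hA'.tsum_sub hC]
      _ = ∑' k : ℕ, (g (k + 1) - g k) * ν₀ ^ k * Real.exp (-ν₀) / (Nat.factorial k : ℝ) := by
          apply tsum_congr; intro k; ring
  rw [← htarget]
  exact key
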